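/- For every n ≥ 3, the cycle C_n on n vertices is defined by a first-order sentence of quantifier rank strictly less than log₂ n + 3; that is, D(C_n) < log₂ n + 3. -/

import Mathlib

namespace FOG

/-- First-order formulas over the vocabulary of (colored) graphs:
equality, adjacency `E`, and unary color predicates `C_i`.
Variables are indexed by natural numbers. -/
inductive Fml : Type
  | eq : ℕ → ℕ → Fml
  | adj : ℕ → ℕ → Fml
  | col : ℕ → ℕ → Fml
  | not : Fml → Fml
  | and : Fml → Fml → Fml
  | or : Fml → Fml → Fml
  | ex : ℕ → Fml → Fml
  | all : ℕ → Fml → Fml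

namespace Fml

/-- Free variables of a formula. -/
def freeVars : Fml → Finset ℕ
  | eq i j => {i, j}
  | adj i j => {i, j}
  | col _ i => {i}
  | not φ => φ.freeVars
  | and φ ψ => φ.freeVars ∪ ψ.freeVars
  | or φ ψ => φ.freeVars ∪ ψ.freeVars
  | ex x φ => φ.freeVars.erase x
  | all x φ => φ.freeVars.erase x

/-- Quantifier rank: maximum depth of nesting of quantifiers. -/
def qr : Fml → ℕ
  | eq _ _ => 0
  | adj _ _ => 0
  | col _ _ => 0
  | not φ => φ.qr
  | and φ ψ => max φ.qr ψ.qr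
  | or φ ψ => max φ.qr ψ.qr
  | ex _ φ => φ.qr + 1
  | all _ φ => φ.qr + 1

/-- The formula uses only the vocabulary `{E, =}` (no color predicates). -/
def noColors : Fml → Prop
  | eq _ _ => True
  | adj _ _ => True
  | col _ _ => False
  | not φ => φ.noColors
  | and φ ψ => φ.noColors ∧ ψ.noColors
  | or φ ψ => φ.noColors ∧ ψ.noColors
  | ex _ φ => φ.noColors
  | all _ φ => φ.noColors

/-- The set (here: list, with possible repetitions) of sequences of nested quantifiers,
`true` standing for `∃` and `false` for `∀`. -/
def nest : Fml → List (List Bool)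
  | eq _ _ => [[]]
  | adj _ _ => [[]]
  | col _ _ => [[]]
  | not φ => φ.nest.map (List.map Bool.not)
  | and φ ψ => φ.nest ++ ψ.nest
  | or φ ψ => φ.nest ++ ψ.nest
  | ex _ φ => φ.nest.map (List.cons true)
  | all _ φ => φ.nest.map (List.cons false)

/-- Number of alternations (occurrences of `∃∀` or `∀∃`) in a sequence of quantifiers. -/
def altCount : List Bool → ℕ
  | [] => 0
  | [_] => 0
  | a :: b :: l => (if a = b then 0 else 1) + altCount (b :: l)

/-- The alternation number of a formula. -/
def altNum (φ : Fml) : ℕ := (φ.nest.map altCount).foldr max 0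

/-- A sentence is a formula with no free variables. -/
def IsSentence (φ : Fml) : Prop := φ.freeVars = ∅

/-- Satisfaction of a formula in a graph `G` with coloring `c` under assignment `ρ`. -/
def Sat {V : Type*} (G : SimpleGraph V) (c : ℕ → V → Prop) (ρ : ℕ → V) : Fml → Prop
  | eq i j => ρ i = ρ j
  | adj i j => G.Adj (ρ i) (ρ j)
  | col k i => c k (ρ i)
  | not φ => ¬ Sat G c ρ φ
  | and φ ψ => Sat G c ρ φ ∧ Sat G c ρ ψ
  | or φ ψ => Sat G c ρ φ ∨ Sat G c ρ ψ
  | ex x φ => ∃ v : V, Sat G c (Function.update ρ x v) φ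
  | all x φ => ∀ v : V, Sat G c (Function.update ρ x v) φ

/-- A formula is true on `(G, c)` if it is satisfied under every assignment. -/
def TrueOn {V : Type*} (G : SimpleGraph V) (c : ℕ → V → Prop) (φ : Fml) : Prop :=
  ∀ ρ : ℕ → V, φ.Sat G c ρ

/-- A formula is false on `(G, c)` if it is satisfied under no assignment. -/
def FalseOn {V : Type*} (G : SimpleGraph V) (c : ℕ → V → Prop) (φ : Fml) : Prop :=
  ∀ ρ : ℕ → V, ¬ φ.Sat G c ρ

end Fml

/-- The trivial (empty) coloring, used to regard plain graphs as colored structures. -/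
def noColoring {V : Type*} : ℕ → V → Prop := fun _ _ => False

/-- A sentence `φ` over `{E, =}` defines the (finite, nonempty) graph `G`:
it is true on `G` and false on every finite graph non-isomorphic to `G`. -/
def Defines {V : Type} (G : SimpleGraph V) (φ : Fml) : Prop :=
  φ.IsSentence ∧ φ.noColors ∧ φ.TrueOn G noColoring ∧
    ∀ (W : Type) [Finite W] [Nonempty W] (H : SimpleGraph W),
      ¬ Nonempty (G ≃g H) → φ.FalseOn H noColoring

/-- `D(G,G')`: minimum quantifier rank of a sentence over `{E, =}` true on `G`
and false on `G'`. -/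
noncomputable def distRank {V W : Type} (G : SimpleGraph V) (H : SimpleGraph W) : ℕ :=
  sInf {r | ∃ φ : Fml, φ.IsSentence ∧ φ.noColors ∧ φ.TrueOn G noColoring ∧
    φ.FalseOn H noColoring ∧ φ.qr = r}

/-- `D^k(G,G')`: as `distRank`, restricted to sentences of alternation number `≤ k`. -/
noncomputable def distRankAlt (k : ℕ) {V W : Type} (G : SimpleGraph V) (H : SimpleGraph W) : ℕ :=
  sInf {r | ∃ φ : Fml, φ.IsSentence ∧ φ.noColors ∧ φ.altNum ≤ k ∧ φ.TrueOn G noColoring ∧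
    φ.FalseOn H noColoring ∧ φ.qr = r}

/-- `D(G)`: minimum quantifier rank of a sentence defining `G`. -/
noncomputable def defRank {V : Type} (G : SimpleGraph V) : ℕ :=
  sInf {r | ∃ φ : Fml, Defines G φ ∧ φ.qr = r}

/-- `D^k(G)`: as `defRank`, restricted to sentences of alternation number `≤ k`. -/
noncomputable def defRankAlt (k : ℕ) {V : Type} (G : SimpleGraph V) : ℕ :=
  sInf {r | ∃ φ : Fml, Defines G φ ∧ φ.altNum ≤ k ∧ φ.qr = r}

/-- A colored graph: a simple graph with unary color predicates, only finitely many
of which are nonempty. -/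
structure ColoredGraph (V : Type*) where
  graph : SimpleGraph V
  color : ℕ → V → Prop
  finColors : {i : ℕ | ∃ v, color i v}.Finite

/-- Isomorphism of colored graphs: a graph isomorphism preserving all colors. -/
def CIso {V W : Type*} (A : ColoredGraph V) (B : ColoredGraph W) : Prop :=
  ∃ f : A.graph ≃g B.graph, ∀ i v, A.color i v ↔ B.color i (f v)

/-- `F` is an `X`-flap of `G`: the vertex set of a connected component of `G - X`. -/
def IsFlap {V : Type*} (G : SimpleGraph V) (X : Set V) (F : Set V) : Prop :=
  ∃ C : (G.induce (Xᶜ : Set V)).ConnectedComponent, F = Subtype.val '' C.supp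

/-- Two `X`-flaps are similar if the identity of `X` extends to an isomorphism
of the induced subgraphs `G[X ∪ F₁]` and `G[X ∪ F₂]`. -/
def SimilarFlaps {V : Type*} (G : SimpleGraph V) (X F₁ F₂ : Set V) : Prop :=
  ∃ f : G.induce (X ∪ F₁) ≃g G.induce (X ∪ F₂),
    ∀ (x : V) (hx : x ∈ X), ((f ⟨x, Or.inl hx⟩ : ↥(X ∪ F₂)) : V) = x

/-- `H` is a minor of `G` (via branch sets). -/
def HasMinor {V W : Type*} (G : SimpleGraph V) (H : SimpleGraph W) : Prop :=
  ∃ B : W → Set V,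
    (∀ w, (B w).Nonempty) ∧
    (∀ w, (G.induce (B w)).Connected) ∧
    (Pairwise fun w₁ w₂ => Disjoint (B w₁) (B w₂)) ∧
    (∀ w₁ w₂, H.Adj w₁ w₂ → ∃ u ∈ B w₁, ∃ v ∈ B w₂, G.Adj u v)

/-- Planarity, via Wagner's characterization: no `K₅` and no `K₃,₃` minor. -/
def Planar {V : Type*} (G : SimpleGraph V) : Prop :=
  ¬ HasMinor G (⊤ : SimpleGraph (Fin 5)) ∧
  ¬ HasMinor G (completeBipartiteGraph (Fin 3) (Fin 3))

/-- Outerplanarity, via the minor characterization: no `K₄` and no `K₂,₃` minor. -/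
def Outerplanar {V : Type*} (G : SimpleGraph V) : Prop :=
  ¬ HasMinor G (⊤ : SimpleGraph (Fin 4)) ∧
  ¬ HasMinor G (completeBipartiteGraph (Fin 2) (Fin 3))

/-- A graph is Hamiltonian if it has a cycle passing through all its vertices. -/
def IsHam {V : Type*} (G : SimpleGraph V) : Prop :=
  ∃ (a : V) (p : G.Walk a a), p.IsCycle ∧ ∀ v : V, v ∈ p.support

/-- The smallest `h` such that `G` has no `K_h` minor. -/
noncomputable def hadwiger {V : Type*} (G : SimpleGraph V) : ℕ :=
  sInf {h : ℕ | ¬ HasMinor G (⊤ : SimpleGraph (Fin h))}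

/-- A rotation system on `G`: a permutation of the darts fixing tails, whose
restriction to the darts at each vertex is a single cycle. -/
structure RotationSystem {V : Type*} (G : SimpleGraph V) where
  σ : Equiv.Perm G.Dart
  fst_fixed : ∀ d : G.Dart, (σ d).toProd.1 = d.toProd.1
  vert_cycle : ∀ d d' : G.Dart, d.toProd.1 = d'.toProd.1 → σ.SameCycle d d'

/-- The dart-reversal involution as a permutation. -/
def dartFlip {V : Type*} (G : SimpleGraph V) : Equiv.Perm G.Dart :=
  ⟨SimpleGraph.Dart.symm, SimpleGraph.Dart.symm,
    fun d => SimpleGraph.Dart.symm_symm d, fun d => SimpleGraph.Dart.symm_symm d⟩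

/-- Number of faces of the embedding given by a rotation system: the number of
orbits of the face permutation `σ ∘ α`. -/
noncomputable def numFaces {V : Type*} (G : SimpleGraph V) (rs : RotationSystem G) : ℕ :=
  Nat.card (Quotient (Setoid.mk (rs.σ * dartFlip G).SameCycle
    ⟨fun _ => Equiv.Perm.SameCycle.refl _ _, Equiv.Perm.SameCycle.symm,
      Equiv.Perm.SameCycle.trans⟩))

/-- `G` (connected) is embeddable in the orientable surface of genus `g`:
by the Heffter–Edmonds principle, some rotation system has Euler genus at most `g`. -/
def GenusAtMost {V : Type*} (G : SimpleGraph V) (g : ℕ) : Prop :=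
  ∃ rs : RotationSystem G,
    (2 : ℤ) - 2 * g ≤ (Nat.card V : ℤ) - Nat.card G.edgeSet + numFaces G rs

end FOG

-- chunk 2 to be appended before the theorem
namespace FOGaux

open SimpleGraph FOG FOG.Fml

/-- There is a walk from `x` to `y` of length at most `t`. -/
def RelLE {V : Type*} (G : SimpleGraph V) (t : ℕ) (x y : V) : Prop :=
  ∃ w : G.Walk x y, w.length ≤ t

/-- Formula asserting distance at most `d` between variables `x` and `y`. -/
theorem relLE_refl {V : Type*} (G : SimpleGraph V) (t : ℕ) (x : V) : RelLE G t x x :=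
  ⟨SimpleGraph.Walk.nil, by simp⟩

theorem relLE_zero {V : Type*} {G : SimpleGraph V} {x y : V} : RelLE G 0 x y ↔ x = y := by
  constructor
  · rintro ⟨w, hw⟩
    exact SimpleGraph.Walk.eq_of_length_eq_zero (Nat.le_zero.mp hw)
  · rintro rfl; exact relLE_refl G 0 x

theorem relLE_one {V : Type*} {G : SimpleGraph V} {x y : V} :
    RelLE G 1 x y ↔ x = y ∨ G.Adj x y := by
  constructor
  · rintro ⟨w, hw⟩
    cases w with
    | nil => exact Or.inl rfl
    | cons h p =>
      simp only [SimpleGraph.Walk.length_cons] at hw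
      obtain rfl := SimpleGraph.Walk.eq_of_length_eq_zero (p := p) (by omega)
      exact Or.inr h
  · rintro (rfl | h)
    · exact relLE_refl G 1 x
    · exact ⟨SimpleGraph.Walk.cons h SimpleGraph.Walk.nil, by simp⟩

theorem relLE_mono {V : Type*} {G : SimpleGraph V} {s t : ℕ} (hst : s ≤ t) {x y : V} :
    RelLE G s x y → RelLE G t x y := by
  rintro ⟨w, hw⟩; exact ⟨w, hw.trans hst⟩

theorem relLE_comp {V : Type*} {G : SimpleGraph V} {s t : ℕ} {x y : V} :
    RelLE G (s + t) x y ↔ ∃ z, RelLE G s x z ∧ RelLE G t z y := by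
  constructor
  · induction s generalizing x with
    | zero =>
      intro h
      exact ⟨x, relLE_refl G 0 x, by simpa using h⟩
    | succ s ih =>
      rintro ⟨w, hw⟩
      cases w with
      | nil => exact ⟨_, relLE_refl G _ _, relLE_refl G t _⟩
      | cons h p =>
        simp only [SimpleGraph.Walk.length_cons] at hw
        obtain ⟨z, hz1, hz2⟩ := ih ⟨p, by omega⟩
        obtain ⟨w1, hw1⟩ := hz1
        exact ⟨z, ⟨SimpleGraph.Walk.cons h w1, by simp only [SimpleGraph.Walk.length_cons]; omega⟩, hz2⟩
  · rintro ⟨z, ⟨w1, hw1⟩, ⟨w2, hw2⟩⟩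
    exact ⟨w1.append w2, by rw [SimpleGraph.Walk.length_append]; omega⟩

theorem relLE_symm {V : Type*} {G : SimpleGraph V} {t : ℕ} {x y : V} :
    RelLE G t x y → RelLE G t y x := by
  rintro ⟨w, hw⟩; exact ⟨w.reverse, by simpa using hw⟩

/-- Formula asserting distance at most `d` between variables `x` and `y`. -/
def dform : ℕ → ℕ → ℕ → Fml
  | 0, x, y => .eq x y
  | 1, x, y => .or (.eq x y) (.adj x y)
  | (d+2), x, y => .ex (3-x-y) (.and (dform ((d+3)/2) x (3-x-y)) (dform ((d+2)/2) (3-x-y) y))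
  termination_by d => d
  decreasing_by all_goals omega

theorem dform_qr (d x y : ℕ) : (dform d x y).qr ≤ Nat.clog 2 d := by
  induction d using Nat.strong_induction_on generalizing x y with
  | _ d ih =>
    match d with
    | 0 => simp [dform, qr]
    | 1 => simp [dform, qr]
    | (d+2) =>
      rw [dform]
      have h1 := ih ((d+3)/2) (by omega) x (3-x-y)
      have h2 := ih ((d+2)/2) (by omega) (3-x-y) y
      have h3 : Nat.clog 2 ((d+2)/2) ≤ Nat.clog 2 ((d+3)/2) := Nat.clog_mono_right _ (by omega)
      have h4 : Nat.clog 2 (d+2) = Nat.clog 2 ((d+3)/2) + 1 := by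
        have h := Nat.clog_of_two_le (b:=2) (n:=d+2) (by omega) (by omega)
        have e : (d+2+2-1)/2 = (d+3)/2 := by omega
        rw [e] at h
        exact h
      simp only [qr]
      omega

theorem dform_noColors (d x y : ℕ) : (dform d x y).noColors := by
  induction d using Nat.strong_induction_on generalizing x y with
  | _ d ih =>
    match d with
    | 0 => simp [dform, noColors]
    | 1 => simp [dform, noColors]
    | (d+2) =>
      rw [dform]
      exact ⟨ih _ (by omega) _ _, ih _ (by omega) _ _⟩

theorem dform_freeVars (d x y : ℕ) : (dform d x y).freeVars ⊆ {x, y} := by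
  induction d using Nat.strong_induction_on generalizing x y with
  | _ d ih =>
    match d with
    | 0 => rw [dform]; intro a ha; simp [freeVars] at ha ⊢; tauto
    | 1 => rw [dform]; intro a ha; simp [freeVars] at ha ⊢; tauto
    | (d+2) =>
      rw [dform]
      intro a ha
      simp only [freeVars, Finset.mem_erase, Finset.mem_union] at ha
      obtain ⟨hne, h | h⟩ := ha
      · have := ih ((d+3)/2) (by omega) x (3-x-y) h
        simp at this ⊢; tauto
      · have := ih ((d+2)/2) (by omega) (3-x-y) y h
        simp at this ⊢; tauto

theorem dform_sat {V : Type*} (G : SimpleGraph V) (c : ℕ → V → Prop) (d x y : ℕ)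
    (hx : x < 3) (hy : y < 3) (hxy : x ≠ y) (ρ : ℕ → V) :
    Fml.Sat G c ρ (dform d x y) ↔ RelLE G d (ρ x) (ρ y) := by
  induction d using Nat.strong_induction_on generalizing x y ρ with
  | _ d ih =>
    match d with
    | 0 =>
      rw [dform]
      simp only [Fml.Sat]
      exact relLE_zero.symm
    | 1 =>
      rw [dform]
      simp only [Fml.Sat]
      exact relLE_one.symm
    | (d+2) =>
      have hz : 3 - x - y < 3 := by omega
      have hzx : 3 - x - y ≠ x := by omega
      have hzy : 3 - x - y ≠ y := by omega
      have hd : (d+3)/2 + (d+2)/2 = d + 2 := by omega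
      rw [dform]
      simp only [Fml.Sat]
      have hcomp := relLE_comp (G:=G) (s:=(d+3)/2) (t:=(d+2)/2) (x:=ρ x) (y:=ρ y)
      rw [hd] at hcomp
      rw [hcomp]
      constructor
      · rintro ⟨v, h1, h2⟩
        rw [ih ((d+3)/2) (by omega) x (3-x-y) hx hz (Ne.symm hzx) _] at h1
        rw [ih ((d+2)/2) (by omega) (3-x-y) y hz hy hzy _] at h2
        rw [Function.update_of_ne (Ne.symm hzx), Function.update_self] at h1
        rw [Function.update_self, Function.update_of_ne (Ne.symm hzy)] at h2
        exact ⟨v, h1, h2⟩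
      · rintro ⟨v, h1, h2⟩
        refine ⟨v, ?_, ?_⟩
        · rw [ih ((d+3)/2) (by omega) x (3-x-y) hx hz (Ne.symm hzx) _,
            Function.update_of_ne (Ne.symm hzx), Function.update_self]
          exact h1
        · rw [ih ((d+2)/2) (by omega) (3-x-y) y hz hy hzy _,
            Function.update_self, Function.update_of_ne (Ne.symm hzy)]
          exact h2

end FOGaux

namespace FOGaux
open SimpleGraph

theorem mod2' (m c : ℕ) (h0 : 0 < m) (h : c < 2*m) :
    (c % m = c ∧ c < m) ∨ (c % m = c - m ∧ m ≤ c) := by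
  rcases Nat.lt_or_ge c m with h' | h'
  · exact Or.inl ⟨Nat.mod_eq_of_lt h', h'⟩
  · refine Or.inr ⟨?_, h'⟩
    rw [Nat.mod_eq_sub_mod h']
    exact Nat.mod_eq_of_lt (by omega)

theorem fin_sub_val' {m : ℕ} (a b : Fin m) :
    (b.val ≤ a.val ∧ (a - b).val = a.val - b.val) ∨
    (a.val < b.val ∧ (a - b).val = m - b.val + a.val) := by
  have h0 : 0 < m := a.pos
  have ha := a.isLt
  have hb := b.isLt
  have hd : (a - b).val = (m - b.val + a.val) % m := by rw [Fin.sub_def]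
  have h2 := mod2' m (m - b.val + a.val) h0 (by omega)
  omega

theorem fin_add_val' {m : ℕ} (a b : Fin m) :
    (a.val + b.val < m ∧ (a + b).val = a.val + b.val) ∨
    (m ≤ a.val + b.val ∧ (a + b).val = a.val + b.val - m) := by
  have h0 : 0 < m := a.pos
  have ha := a.isLt
  have hb := b.isLt
  have hd : (a + b).val = (a.val + b.val) % m := Fin.val_add a b
  have h2 := mod2' m (a.val + b.val) h0 (by omega)
  omega

/-- circular distance -/
def circ {m : ℕ} (a b : Fin m) : ℕ := min (b - a).val (a - b).val

theorem circ_le_half {m : ℕ} (a b : Fin m) : circ a b ≤ m / 2 := by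
  unfold circ
  have h1 := fin_sub_val' a b
  have h2 := fin_sub_val' b a
  have ha := a.isLt
  omega

theorem circ_self {m : ℕ} (a : Fin m) : circ a a = 0 := by
  unfold circ
  have h1 := fin_sub_val' a a
  omega

theorem circ_eq_zero {m : ℕ} {a b : Fin m} (h : circ a b = 0) : a = b := by
  unfold circ at h
  have h1 := fin_sub_val' a b
  have h2 := fin_sub_val' b a
  have ha := a.isLt
  have hb := b.isLt
  exact Fin.ext (by omega)

/-- walk upward around the cycle -/
theorem cycle_walkUp {m : ℕ} (hm : 3 ≤ m) :
    ∀ (d : ℕ) (i j : Fin m), (j - i).val = d → RelLE (cycleGraph m) d i j := by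
  intro d
  induction d with
  | zero =>
    intro i j h
    have h1 := fin_sub_val' j i
    have hi := i.isLt
    have : j = i := Fin.ext (by omega)
    rw [this]
    exact relLE_refl _ _ _
  | succ d ih =>
    intro i j h
    set o : Fin m := ⟨1, by omega⟩ with ho
    have hone : o.val = 1 := rfl
    have hji := fin_sub_val' j i
    have hj1 := fin_sub_val' j o
    have hj1i := fin_sub_val' (j - o) i
    have hjj1 := fin_sub_val' j (j - o)
    have hi := i.isLt
    have hj := j.isLt
    have hj1' := (j - o).isLt
    obtain ⟨w, hlen⟩ := ih i (j - o) (by omega)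
    have hadj : (cycleGraph m).Adj (j - o) j := by
      rw [cycleGraph_adj']
      right
      omega
    exact ⟨w.append (Walk.cons hadj Walk.nil), by
      rw [Walk.length_append]; simp; omega⟩

theorem circ_adj_step {m : ℕ} (hm : 3 ≤ m) {i x : Fin m}
    (h : (cycleGraph m).Adj i x) (j : Fin m) : circ i j ≤ 1 + circ x j := by
  have h1 := fin_sub_val' i j
  have h2 := fin_sub_val' j i
  have h3 := fin_sub_val' x j
  have h4 := fin_sub_val' j x
  have h5 := fin_sub_val' i x
  have h6 := fin_sub_val' x i
  have hi := i.isLt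
  have hj := j.isLt
  have hx := x.isLt
  have hadj := cycleGraph_adj'.mp h
  unfold circ
  omega

theorem cycle_walk_lower {m : ℕ} (hm : 3 ≤ m) {i j : Fin m}
    (w : (cycleGraph m).Walk i j) : circ i j ≤ w.length := by
  induction w with
  | nil => simp [circ_self]
  | @cons u v z hadj p ih =>
    have := circ_adj_step hm hadj z
    simp only [Walk.length_cons]
    omega

theorem relLE_cycle {m : ℕ} (hm : 3 ≤ m) (t : ℕ) (i j : Fin m) :
    RelLE (cycleGraph m) t i j ↔ circ i j ≤ t := by
  constructor
  · rintro ⟨w, hw⟩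
    exact (cycle_walk_lower hm w).trans hw
  · intro h
    unfold circ at h
    rcases Nat.le_total ((j - i).val) ((i - j).val) with hle | hle
    · exact relLE_mono (by omega) (cycle_walkUp hm _ i j rfl)
    · exact relLE_symm (relLE_mono (by omega) (cycle_walkUp hm _ j i rfl))

end FOGaux

namespace FOGaux
open SimpleGraph

/-- every vertex has exactly two neighbors -/
def TwoReg {W : Type*} (H : SimpleGraph W) : Prop :=
  ∀ v : W, ∃ a b : W, a ≠ b ∧ H.Adj v a ∧ H.Adj v b ∧ ∀ c, H.Adj v c → c = a ∨ c = b

theorem nbr_pair {W : Type*} (H : SimpleGraph W) (hdeg : TwoReg H) (v a b : W)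
    (hab : a ≠ b) (ha : H.Adj v a) (hb : H.Adj v b) :
    ∀ c, H.Adj v c → c = a ∨ c = b := by
  obtain ⟨a', b', hab', ha', hb', hu'⟩ := hdeg v
  intro c hc
  rcases hu' a ha with h1 | h1 <;> rcases hu' b hb with h2 | h2 <;>
    rcases hu' c hc with h3 | h3 <;> subst_vars <;> tauto

open scoped Classical in
/-- the neighbor of `v` other than `u` -/
noncomputable def other {W : Type*} (H : SimpleGraph W) (v u : W) : W :=
  if h : ∃ c, H.Adj v c ∧ c ≠ u then h.choose else u

theorem other_adj {W : Type*} (H : SimpleGraph W) (hdeg : TwoReg H) {v u : W}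
    (h : H.Adj v u) : H.Adj v (other H v u) ∧ other H v u ≠ u := by
  obtain ⟨a, b, hab, ha, hb, hu⟩ := hdeg v
  have hex : ∃ c, H.Adj v c ∧ c ≠ u := by
    by_cases hau : a = u
    · exact ⟨b, hb, fun hh => hab (by rw [hau, hh])⟩
    · exact ⟨a, ha, hau⟩
  rw [other]
  rw [dif_pos hex]
  exact hex.choose_spec

theorem other_unique {W : Type*} (H : SimpleGraph W) (hdeg : TwoReg H) {v u : W}
    (h : H.Adj v u) (c : W) (hc : H.Adj v c) (hcu : c ≠ u) : c = other H v u := by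
  obtain ⟨hadj, hne⟩ := other_adj H hdeg h
  rcases nbr_pair H hdeg v u c (Ne.symm hcu) h hc _ hadj with h1 | h1
  · exact absurd h1 hne
  · exact h1.symm

/-- the walk-around sequence -/
noncomputable def seq {W : Type*} (H : SimpleGraph W) (v0 a0 : W) : ℕ → W
  | 0 => v0
  | 1 => a0
  | (i+2) => other H (seq H v0 a0 (i+1)) (seq H v0 a0 i)

theorem classify {W : Type} [Finite W] [Nonempty W] (H : SimpleGraph W)
    (hdeg : TwoReg H) (hconn : H.Preconnected) :
    ∃ p : ℕ, 3 ≤ p ∧ Nonempty (cycleGraph p ≃g H) := by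
  classical
  obtain ⟨v0⟩ := ‹Nonempty W›
  obtain ⟨a0, b0, hab, ha, hb, huniq⟩ := hdeg v0
  set f := seq H v0 a0 with hf
  have f0 : f 0 = v0 := rfl
  have f1 : f 1 = a0 := rfl
  have frec : ∀ i, f (i+2) = other H (f (i+1)) (f i) := fun i => by rw [hf, seq]
  have adj_step : ∀ i, H.Adj (f i) (f (i+1)) := by
    intro i
    induction i with
    | zero => exact ha
    | succ i ih =>
      rw [frec i]
      exact (other_adj H hdeg ih.symm).1
  have ne_step : ∀ i, f (i+2) ≠ f i := by
    intro i; rw [frec i]; exact (other_adj H hdeg (adj_step i).symm).2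
  have nbrs : ∀ i c, H.Adj (f (i+1)) c → c = f i ∨ c = f (i+2) := by
    intro i c hc
    exact nbr_pair H hdeg (f (i+1)) (f i) (f (i+2)) (Ne.symm (ne_step i))
      (adj_step i).symm (adj_step (i+1)) c hc
  have back_uniq : ∀ i, f i = other H (f (i+1)) (f (i+2)) :=
    fun i => other_unique H hdeg (adj_step (i+1)) (f i) (adj_step i).symm (Ne.symm (ne_step i))
  set g : ℕ → W × W := fun i => (f i, f (i+1)) with hg
  have g_back : ∀ i j, g (i+1) = g (j+1) → g i = g j := by
    intro i j h
    have h1 : f (i+1) = f (j+1) := congrArg Prod.fst h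
    have h2 : f (i+2) = f (j+2) := congrArg Prod.snd h
    have h3 : f i = f j := by rw [back_uniq i, back_uniq j, h1, h2]
    exact Prod.ext h3 h1
  have g_fwd : ∀ i j, g i = g j → g (i+1) = g (j+1) := by
    intro i j h
    have h1 : f i = f j := congrArg Prod.fst h
    have h2 : f (i+1) = f (j+1) := congrArg Prod.snd h
    have h3 : f (i+2) = f (j+2) := by rw [frec i, frec j, h1, h2]
    exact Prod.ext h2 h3
  have g_fwd_t : ∀ t i j, g i = g j → g (i+t) = g (j+t) := by
    intro t
    induction t with
    | zero => intro i j h; exact h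
    | succ t ih =>
      intro i j h
      have := g_fwd _ _ (ih i j h)
      rwa [show i+(t+1) = (i+t)+1 by omega, show j+(t+1) = (j+t)+1 by omega]
  have g_back_t : ∀ t i j, g (i+t) = g (j+t) → g i = g j := by
    intro t
    induction t with
    | zero => intro i j h; exact h
    | succ t ih =>
      intro i j h
      rw [show i+(t+1) = (i+t)+1 by omega, show j+(t+1) = (j+t)+1 by omega] at h
      exact ih i j (g_back _ _ h)
  have hex : ∃ q, 0 < q ∧ g q = g 0 := by
    obtain ⟨i, j, hij, hgij⟩ := Finite.exists_ne_map_eq_of_infinite g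
    rcases Ne.lt_or_gt hij with h | h
    · refine ⟨j - i, by omega, ?_⟩
      apply g_back_t i
      rw [show j - i + i = j by omega, Nat.zero_add]
      exact hgij.symm
    · refine ⟨i - j, by omega, ?_⟩
      apply g_back_t j
      rw [show i - j + j = i by omega, Nat.zero_add]
      exact hgij
  set p := Nat.find hex with hp
  obtain ⟨hp0, hps⟩ : 0 < p ∧ g p = g 0 := Nat.find_spec hex
  have hp_min : ∀ q, 0 < q → g q = g 0 → p ≤ q := fun q h1 h2 => Nat.find_le ⟨h1, h2⟩
  have g_per : ∀ i, g (i + p) = g i := by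
    intro i
    have h := g_fwd_t i p 0 hps
    rw [Nat.zero_add] at h
    rw [Nat.add_comm]
    exact h
  have f_per : ∀ i, f (i + p) = f i := fun i => congrArg Prod.fst (g_per i)
  have hp3 : 3 ≤ p := by
    by_contra hlt
    have hcase : p = 1 ∨ p = 2 := by omega
    rcases hcase with h | h
    · rw [h] at hps
      have : f 1 = f 0 := congrArg Prod.fst hps
      exact ha.ne' (by rw [← f0, ← f1, this])
    · rw [h] at hps
      have : f 2 = f 0 := congrArg Prod.fst hps
      exact ne_step 0 this
  -- injectivity of f on [0, p)
  have f_inj : ∀ j, j < p → ∀ i, i < j → f i ≠ f j := by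
    intro j
    induction j using Nat.strong_induction_on with
    | _ j IH =>
      intro hjp i hij heq
      obtain ⟨j', rfl⟩ : ∃ j', j = j' + 1 := ⟨j - 1, by omega⟩
      have hadjij : H.Adj (f (j'+1)) (f (i+1)) := by rw [← heq]; exact adj_step i
      rcases nbrs j' (f (i+1)) hadjij with hcase | hcase
      · rcases Nat.lt_trichotomy (i+1) j' with h | h | h
        · exact IH j' (by omega) (by omega) (i+1) h hcase
        · refine ne_step i ?_
          rw [← h] at heq
          exact heq.symm
        · have hii : i = j' := by omega
          rw [hii] at hcase
          exact (adj_step j').ne' hcase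
      · have hgi : g i = g (j'+1) := Prod.ext heq hcase
        have hg0 : g 0 = g (j'+1-i) := by
          apply g_back_t i
          rw [show j'+1-i+i = j'+1 by omega, Nat.zero_add]
          exact hgi
        have := hp_min (j'+1-i) (by omega) hg0.symm
        omega
  have f_inj' : ∀ i j, i < p → j < p → f i = f j → i = j := by
    intro i j hi hj hij
    rcases Nat.lt_trichotomy i j with h | h | h
    · exact absurd hij (f_inj j hj i h)
    · exact h
    · exact absurd hij.symm (f_inj i hi j h)
  have f_mod : ∀ i, f i = f (i % p) := by
    intro i
    induction i using Nat.strong_induction_on with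
    | _ i IH =>
      rcases Nat.lt_or_ge i p with h | h
      · rw [Nat.mod_eq_of_lt h]
      · have h1 : f i = f (i - p) := by
          rw [← f_per (i - p), show i - p + p = i by omega]
        rw [h1, IH (i - p) (by omega), Nat.mod_eq_sub_mod h]
  have range_closed : ∀ x y, H.Adj x y → (∃ t, t < p ∧ f t = x) → (∃ t, t < p ∧ f t = y) := by
    rintro x y hxy ⟨t, htp, rfl⟩
    have h2 : H.Adj (f ((t+p-1)+1)) y := by
      rw [show (t+p-1)+1 = t+p by omega, f_per t]
      exact hxy
    rcases nbrs (t+p-1) y h2 with h | h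
    · exact ⟨(t+p-1) % p, Nat.mod_lt _ (by omega), by rw [← f_mod]; exact h.symm⟩
    · refine ⟨(t+p+1) % p, Nat.mod_lt _ (by omega), ?_⟩
      rw [← f_mod, show t+p+1 = (t+p-1)+2 by omega]
      exact h.symm
  have walk_range : ∀ (x y : W), H.Walk x y → (∃ t, t < p ∧ f t = x) → (∃ t, t < p ∧ f t = y) := by
    intro x y w
    induction w with
    | nil => exact id
    | cons hadj q IH => intro hx; exact IH (range_closed _ _ hadj hx)
  have f_surj : ∀ y : W, ∃ t, t < p ∧ f t = y := by
    intro y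
    obtain ⟨w⟩ := hconn (f 0) y
    exact walk_range (f 0) y w ⟨0, by omega, rfl⟩
  set e : Fin p → W := fun t => f t.val with he
  have e_bij : Function.Bijective e := by
    constructor
    · intro s t hst
      exact Fin.ext (f_inj' s.val t.val s.isLt t.isLt hst)
    · intro y
      obtain ⟨t, htp, hft⟩ := f_surj y
      exact ⟨⟨t, htp⟩, hft⟩
  have adj_iff : ∀ s t : Fin p, (cycleGraph p).Adj s t ↔ H.Adj (e s) (e t) := by
    intro s t
    have hs := s.isLt
    have ht := t.isLt
    have h1 := fin_sub_val' s t
    have h2 := fin_sub_val' t s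
    constructor
    · intro hadj
      rcases cycleGraph_adj'.mp hadj with hc | hc
      · -- (s - t).val = 1 : s = t + 1 around
        rcases h1 with ⟨_, hv⟩ | ⟨_, hv⟩
        · -- s.val = t.val + 1
          have : s.val = t.val + 1 := by omega
          rw [he]
          simp only
          rw [this]
          exact (adj_step t.val).symm
        · -- t.val = p - 1, s.val = 0
          have hts : t.val = p - 1 ∧ s.val = 0 := by omega
          rw [he]; simp only
          rw [hts.1, hts.2, ← f_per 0, show 0 + p = (p-1) + 1 by omega]
          exact (adj_step (p-1)).symm
      · -- (t - s).val = 1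
        rcases h2 with ⟨_, hv⟩ | ⟨_, hv⟩
        · have : t.val = s.val + 1 := by omega
          rw [he]; simp only
          rw [this]
          exact adj_step s.val
        · have hts : s.val = p - 1 ∧ t.val = 0 := by omega
          rw [he]; simp only
          rw [hts.1, hts.2, ← f_per 0, show 0 + p = (p-1) + 1 by omega]
          exact adj_step (p-1)
    · intro hadj
      rw [he] at hadj
      simp only at hadj
      have hshift : H.Adj (f ((s.val+p-1)+1)) (f t.val) := by
        rw [show (s.val+p-1)+1 = s.val+p by omega, f_per s.val]
        exact hadj
      rcases nbrs (s.val+p-1) (f t.val) hshift with h | h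
      · -- f t.val = f (s.val+p-1)
        have hmm : (s.val+p-1) % p < p := Nat.mod_lt _ (by omega)
        have heq : t.val = (s.val+p-1) % p :=
          f_inj' t.val _ t.isLt hmm (by rw [← f_mod]; exact h)
        have hmod := mod2' p (s.val+p-1) (by omega) (by omega)
        rw [cycleGraph_adj']
        left
        omega
      · -- f t.val = f (s.val+p+1)
        have hmm : (s.val+p+1) % p < p := Nat.mod_lt _ (by omega)
        have heq : t.val = (s.val+p+1) % p := by
          refine f_inj' t.val _ t.isLt hmm ?_
          rw [← f_mod, show s.val+p+1 = (s.val+p-1)+2 by omega]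
          exact h
        have e1 : (s.val+p+1) % p = (s.val+1) % p := by
          rw [show s.val+p+1 = s.val+1+p by omega, Nat.add_mod_right]
        have hmod := mod2' p (s.val+1) (by omega) (by omega)
        rw [cycleGraph_adj']
        right
        omega
  exact ⟨p, hp3, ⟨{ toEquiv := Equiv.ofBijective e e_bij,
                    map_rel_iff' := fun {s t} => (adj_iff s t).symm }⟩⟩

/-- transfer of bounded reachability along an isomorphism -/
theorem iso_relLE {V W : Type*} {G : SimpleGraph V} {H : SimpleGraph W}
    (φ : G ≃g H) (t : ℕ) (x y : V) :
    RelLE H t (φ x) (φ y) ↔ RelLE G t x y := by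
  constructor
  · rintro ⟨w, hw⟩
    have h2 : RelLE G t (φ.symm (φ x)) (φ.symm (φ y)) :=
      ⟨w.map φ.symm.toHom, by rw [SimpleGraph.Walk.length_map]; exact hw⟩
    simpa using h2
  · rintro ⟨w, hw⟩
    exact ⟨w.map φ.toHom, by rw [SimpleGraph.Walk.length_map]; exact hw⟩

end FOGaux

namespace FOGaux
open FOG FOG.Fml SimpleGraph

/-- "every vertex has exactly two neighbors" -/
def deg2F : Fml :=
  .all 0 (.ex 1 (.ex 2 (.and (.not (.eq 1 2)) (.and (.adj 0 1) (.and (.adj 0 2)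
    (.all 3 (.or (.not (.adj 0 3)) (.or (.eq 3 1) (.eq 3 2)))))))))

def diamF (k : ℕ) : Fml := .all 0 (.all 1 (dform k 0 1))

/-- with free variable 0: there are two distinct vertices at distance > t from x₀ -/
def farTwoF (t : ℕ) : Fml :=
  .ex 1 (.ex 2 (.and (.not (.eq 1 2)) (.and (.not (dform t 0 1)) (.not (dform t 0 2)))))

def phiOdd (k : ℕ) : Fml := .and deg2F (.and (diamF k) (.all 0 (farTwoF (k-1))))

def phiEven (k : ℕ) : Fml := .and deg2F (.and (diamF k)
  (.and (.ex 0 (.ex 1 (.not (dform (k-1) 0 1)))) (.all 0 (.not (farTwoF (k-1))))))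

section SatChar
variable {W : Type*} (H : SimpleGraph W) (c : ℕ → W → Prop)

theorem sat_deg2 (ρ : ℕ → W) : Fml.Sat H c ρ deg2F ↔ TwoReg H := by
  simp only [deg2F, Fml.Sat, TwoReg]
  simp [Function.update]
  constructor <;> intro h v <;> obtain ⟨a, b, h1, h2, h3, h4⟩ := h v <;>
    exact ⟨a, b, h1, h2, h3, fun cc => by have := h4 cc; tauto⟩


theorem sat_diam (k : ℕ) (ρ : ℕ → W) :
    Fml.Sat H c ρ (diamF k) ↔ ∀ x y : W, RelLE H k x y := by
  simp only [diamF, Fml.Sat]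
  refine forall_congr' fun v => forall_congr' fun w => ?_
  rw [dform_sat H c k 0 1 (by omega) (by omega) (by omega)]
  simp [Function.update]

theorem sat_farTwo (t : ℕ) (ρ : ℕ → W) :
    Fml.Sat H c ρ (farTwoF t) ↔
      ∃ y z : W, y ≠ z ∧ ¬ RelLE H t (ρ 0) y ∧ ¬ RelLE H t (ρ 0) z := by
  simp only [farTwoF, Fml.Sat]
  refine exists_congr fun y => exists_congr fun z => ?_
  rw [dform_sat H c t 0 1 (by omega) (by omega) (by omega),
    dform_sat H c t 0 2 (by omega) (by omega) (by omega)]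
  simp [Function.update]

/-- semantic content of `phiOdd` -/
def POdd {W : Type*} (H : SimpleGraph W) (k : ℕ) : Prop :=
  TwoReg H ∧ (∀ x y : W, RelLE H k x y) ∧
    ∀ x : W, ∃ y z : W, y ≠ z ∧ ¬ RelLE H (k-1) x y ∧ ¬ RelLE H (k-1) x z

/-- semantic content of `phiEven` -/
def PEven {W : Type*} (H : SimpleGraph W) (k : ℕ) : Prop :=
  TwoReg H ∧ (∀ x y : W, RelLE H k x y) ∧
    (∃ x y : W, ¬ RelLE H (k-1) x y) ∧
    ∀ x y z : W, y ≠ z → RelLE H (k-1) x y ∨ RelLE H (k-1) x z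

theorem sat_phiOdd (k : ℕ) (ρ : ℕ → W) :
    Fml.Sat H c ρ (phiOdd k) ↔ POdd H k := by
  have h0 : Fml.Sat H c ρ (phiOdd k) ↔
      Fml.Sat H c ρ deg2F ∧ Fml.Sat H c ρ (diamF k) ∧
      ∀ v : W, Fml.Sat H c (Function.update ρ 0 v) (farTwoF (k-1)) := Iff.rfl
  rw [h0, sat_deg2, sat_diam]
  unfold POdd
  refine and_congr_right fun _ => and_congr_right fun _ => forall_congr' fun v => ?_
  rw [sat_farTwo]
  simp [Function.update]

theorem sat_phiEven (k : ℕ) (ρ : ℕ → W) :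
    Fml.Sat H c ρ (phiEven k) ↔ PEven H k := by
  have h0 : Fml.Sat H c ρ (phiEven k) ↔
      Fml.Sat H c ρ deg2F ∧ Fml.Sat H c ρ (diamF k) ∧
      (∃ x y : W, Fml.Sat H c (Function.update (Function.update ρ 0 x) 1 y) (Fml.not (dform (k-1) 0 1))) ∧
      ∀ v : W, ¬ Fml.Sat H c (Function.update ρ 0 v) (farTwoF (k-1)) := Iff.rfl
  rw [h0, sat_deg2, sat_diam]
  unfold PEven
  refine and_congr_right fun _ => and_congr_right fun _ => and_congr ?_ ?_
  · refine exists_congr fun x => exists_congr fun y => ?_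
    have : Fml.Sat H c (Function.update (Function.update ρ 0 x) 1 y) (Fml.not (dform (k-1) 0 1)) ↔
        ¬ Fml.Sat H c (Function.update (Function.update ρ 0 x) 1 y) (dform (k-1) 0 1) := Iff.rfl
    rw [this, dform_sat H c (k-1) 0 1 (by omega) (by omega) (by omega)]
    simp [Function.update]
  · refine forall_congr' fun v => ?_
    rw [sat_farTwo]
    simp only [Function.update_self]
    push_neg
    constructor
    · intro h y z hyz
      by_contra hc
      push_neg at hc
      exact hc.2 (h y z hyz hc.1)
    · intro h y z hyz h1
      rcases h y z hyz with h' | h'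
      · exact absurd h' h1
      · exact h'

end SatChar
end FOGaux

namespace FOGaux
open SimpleGraph

theorem twoReg_cycle {m : ℕ} (hm : 3 ≤ m) : TwoReg (cycleGraph m) := by
  intro v
  set o : Fin m := ⟨1, by omega⟩ with ho
  have ho1 : o.val = 1 := rfl
  have hv := v.isLt
  have hadd := fin_add_val' v o
  have hsub := fin_sub_val' v o
  refine ⟨v + o, v - o, ?_, ?_, ?_, ?_⟩
  · intro h
    have := congrArg Fin.val h
    omega
  · rw [cycleGraph_adj']
    have h1 := fin_sub_val' (v + o) v
    right; omega
  · rw [cycleGraph_adj']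
    have h1 := fin_sub_val' v (v - o)
    left; omega
  · intro c hc
    have hcv := c.isLt
    have h1 := fin_sub_val' v c
    have h2 := fin_sub_val' c v
    rcases cycleGraph_adj'.mp hc with h | h
    · right
      apply Fin.ext
      omega
    · left
      apply Fin.ext
      omega

theorem circ_add_left {m : ℕ} (x : Fin m) (c : ℕ) (hc : 0 < c) (hcm : c < m) :
    circ x (x + ⟨c, hcm⟩) = min c (m - c) := by
  have hv := x.isLt
  have h1 := fin_add_val' x ⟨c, hcm⟩
  have h2 := fin_sub_val' (x + ⟨c, hcm⟩) x
  have h3 := fin_sub_val' x (x + ⟨c, hcm⟩)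
  have hmk : (⟨c, hcm⟩ : Fin m).val = c := rfl
  rw [hmk] at h1
  unfold circ
  omega

theorem podd_cycle (k : ℕ) (hk : 1 ≤ k) : POdd (cycleGraph (2*k+1)) k := by
  have hm : 3 ≤ 2*k+1 := by omega
  refine ⟨twoReg_cycle hm, ?_, ?_⟩
  · intro x y
    rw [relLE_cycle hm]
    have := circ_le_half x y
    omega
  · intro x
    refine ⟨x + ⟨k, by omega⟩, x + ⟨k+1, by omega⟩, ?_, ?_, ?_⟩
    · intro h
      have h1 := fin_add_val' x ⟨k, by omega⟩
      have h2 := fin_add_val' x ⟨k+1, by omega⟩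
      have := congrArg Fin.val h
      rw [show ((⟨k, by omega⟩ : Fin (2*k+1))).val = k from rfl] at h1
      rw [show ((⟨k+1, by omega⟩ : Fin (2*k+1))).val = k+1 from rfl] at h2
      have hv := x.isLt
      omega
    · rw [relLE_cycle hm, circ_add_left x k hk (by omega)]
      omega
    · rw [relLE_cycle hm, circ_add_left x (k+1) (by omega) (by omega)]
      omega

theorem peven_cycle (k : ℕ) (hk : 2 ≤ k) : PEven (cycleGraph (2*k)) k := by
  have hm : 3 ≤ 2*k := by omega
  refine ⟨twoReg_cycle hm, ?_, ?_, ?_⟩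
  · intro x y
    rw [relLE_cycle hm]
    have := circ_le_half x y
    omega
  · refine ⟨⟨0, by omega⟩, ⟨0, by omega⟩ + ⟨k, by omega⟩, ?_⟩
    rw [relLE_cycle hm, circ_add_left _ k (by omega) (by omega)]
    omega
  · intro x y z hyz
    by_contra hc
    push_neg at hc
    rw [relLE_cycle hm] at hc
    rw [relLE_cycle hm] at hc
    obtain ⟨hcy, hcz⟩ := hc
    -- both at circular distance ≥ k, hence = k, hence equal
    have hy1 := fin_sub_val' y x
    have hy2 := fin_sub_val' x y
    have hz1 := fin_sub_val' z x
    have hz2 := fin_sub_val' x z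
    have hvx := x.isLt
    have hvy := y.isLt
    have hvz := z.isLt
    unfold circ at hcy hcz
    exact hyz (Fin.ext (by omega))

theorem cycle_diam_bound {p k : ℕ} (hp : 3 ≤ p)
    (hdiam : ∀ x y : Fin p, RelLE (cycleGraph p) k x y) : p ≤ 2*k+1 := by
  have hlt : p/2 < p := by omega
  have h0 : (0:ℕ) < p := by omega
  have := (relLE_cycle hp k ⟨0, h0⟩ ⟨p/2, hlt⟩).mp (hdiam ⟨0, h0⟩ ⟨p/2, hlt⟩)
  have e1 := fin_sub_val' (⟨p/2, hlt⟩ : Fin p) ⟨0, h0⟩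
  have e2 := fin_sub_val' (⟨0, h0⟩ : Fin p) ⟨p/2, hlt⟩
  rw [show ((⟨p/2, hlt⟩ : Fin p)).val = p/2 from rfl,
    show ((⟨0, h0⟩ : Fin p)).val = 0 from rfl] at e1 e2
  unfold circ at this
  omega

theorem pin_odd {p k : ℕ} (hp : 3 ≤ p) (hk : 1 ≤ k)
    (h : POdd (cycleGraph p) k) : p = 2*k+1 := by
  obtain ⟨-, hdiam, hfar⟩ := h
  have h1 : p ≤ 2*k+1 := cycle_diam_bound hp hdiam
  obtain ⟨y, z, hyz, hy, hz⟩ := hfar ⟨0, by omega⟩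
  rw [relLE_cycle hp] at hy hz
  have hy1 := fin_sub_val' y ⟨0, by omega⟩
  have hy2 := fin_sub_val' (⟨0, by omega⟩ : Fin p) y
  have hz1 := fin_sub_val' z ⟨0, by omega⟩
  have hz2 := fin_sub_val' (⟨0, by omega⟩ : Fin p) z
  have hvy := y.isLt
  have hvz := z.isLt
  have hyzv : y.val ≠ z.val := fun hh => hyz (Fin.ext hh)
  unfold circ at hy hz
  rw [show ((⟨0, by omega⟩ : Fin p)).val = 0 from rfl] at hy1 hy2 hz1 hz2
  omega

theorem pin_even {p k : ℕ} (hp : 3 ≤ p) (hk : 2 ≤ k)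
    (h : PEven (cycleGraph p) k) : p = 2*k := by
  obtain ⟨-, hdiam, hex, huniq⟩ := h
  have h1 : p ≤ 2*k+1 := cycle_diam_bound hp hdiam
  obtain ⟨x, y, hxy⟩ := hex
  rw [relLE_cycle hp] at hxy
  have h2 : 2*k ≤ p := by
    have := circ_le_half x y
    omega
  -- so p = 2k or 2k+1; rule out odd
  by_contra hne
  have hpo : p = 2*k+1 := by omega
  subst hpo
  have hne2 : (⟨0, by omega⟩ + ⟨k, by omega⟩ : Fin (2*k+1)) ≠ ⟨0, by omega⟩ + ⟨k+1, by omega⟩ := by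
    intro hh
    have h1 := fin_add_val' (⟨0, by omega⟩ : Fin (2*k+1)) ⟨k, by omega⟩
    have h2 := fin_add_val' (⟨0, by omega⟩ : Fin (2*k+1)) ⟨k+1, by omega⟩
    have h3 := congrArg Fin.val hh
    rw [show ((⟨k, by omega⟩ : Fin (2*k+1))).val = k from rfl,
      show ((⟨0, by omega⟩ : Fin (2*k+1))).val = 0 from rfl] at h1
    rw [show ((⟨k+1, by omega⟩ : Fin (2*k+1))).val = k+1 from rfl,
      show ((⟨0, by omega⟩ : Fin (2*k+1))).val = 0 from rfl] at h2
    omega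
  rcases huniq ⟨0, by omega⟩ (⟨0, by omega⟩ + ⟨k, by omega⟩) (⟨0, by omega⟩ + ⟨k+1, by omega⟩) hne2 with hc | hc
  · rw [relLE_cycle hp, circ_add_left _ k (by omega) (by omega)] at hc
    omega
  · rw [relLE_cycle hp, circ_add_left _ (k+1) (by omega) (by omega)] at hc
    omega

end FOGaux

namespace FOGaux
open FOG FOG.Fml SimpleGraph

theorem qr_phiOdd (k : ℕ) : (phiOdd k).qr ≤ max 4 (3 + Nat.clog 2 k) := by
  have h1 := dform_qr k 0 1
  have h2 := dform_qr (k-1) 0 1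
  have h3 := dform_qr (k-1) 0 2
  have hmono : Nat.clog 2 (k-1) ≤ Nat.clog 2 k := Nat.clog_mono_right _ (by omega)
  simp only [phiOdd, diamF, farTwoF, deg2F, Fml.qr]
  omega

theorem qr_phiEven (k : ℕ) : (phiEven k).qr ≤ max 4 (3 + Nat.clog 2 k) := by
  have h1 := dform_qr k 0 1
  have h2 := dform_qr (k-1) 0 1
  have h3 := dform_qr (k-1) 0 2
  have hmono : Nat.clog 2 (k-1) ≤ Nat.clog 2 k := Nat.clog_mono_right _ (by omega)
  simp only [phiEven, diamF, farTwoF, deg2F, Fml.qr]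
  omega

theorem nc_phiOdd (k : ℕ) : (phiOdd k).noColors := by
  simp [phiOdd, diamF, farTwoF, deg2F, Fml.noColors, dform_noColors]

theorem nc_phiEven (k : ℕ) : (phiEven k).noColors := by
  simp [phiEven, diamF, farTwoF, deg2F, Fml.noColors, dform_noColors]

theorem sent_phiOdd (k : ℕ) : (phiOdd k).IsSentence := by
  have h1 := dform_freeVars k 0 1
  have h2 := dform_freeVars (k-1) 0 1
  have h3 := dform_freeVars (k-1) 0 2
  rw [Fml.IsSentence]
  simp only [phiOdd, diamF, farTwoF, deg2F, Fml.freeVars]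
  rw [Finset.eq_empty_iff_forall_notMem]
  intro a ha
  simp only [Finset.mem_union, Finset.mem_erase, Finset.mem_insert,
    Finset.mem_singleton] at ha
  rcases ha with h | h | h
  · omega
  · obtain ⟨ha0, ha1, hin⟩ := h
    have := h1 hin
    simp only [Finset.mem_insert, Finset.mem_singleton] at this
    omega
  · obtain ⟨ha0, ha1, ha2, hh⟩ := h
    rcases hh with hh | hh | hh
    · omega
    · have := h2 hh
      simp only [Finset.mem_insert, Finset.mem_singleton] at this
      omega
    · have := h3 hh
      simp only [Finset.mem_insert, Finset.mem_singleton] at this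
      omega

theorem sent_phiEven (k : ℕ) : (phiEven k).IsSentence := by
  have h1 := dform_freeVars k 0 1
  have h2 := dform_freeVars (k-1) 0 1
  have h3 := dform_freeVars (k-1) 0 2
  rw [Fml.IsSentence]
  simp only [phiEven, diamF, farTwoF, deg2F, Fml.freeVars]
  rw [Finset.eq_empty_iff_forall_notMem]
  intro a ha
  simp only [Finset.mem_union, Finset.mem_erase, Finset.mem_insert,
    Finset.mem_singleton] at ha
  rcases ha with h | h | h | h
  · omega
  · obtain ⟨ha0, ha1, hin⟩ := h
    have := h1 hin
    simp only [Finset.mem_insert, Finset.mem_singleton] at this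
    omega
  · obtain ⟨ha0, ha1, hin⟩ := h
    have := h2 hin
    simp only [Finset.mem_insert, Finset.mem_singleton] at this
    omega
  · obtain ⟨ha0, ha1, ha2, hh⟩ := h
    rcases hh with hh | hh | hh
    · omega
    · have := h2 hh
      simp only [Finset.mem_insert, Finset.mem_singleton] at this
      omega
    · have := h3 hh
      simp only [Finset.mem_insert, Finset.mem_singleton] at this
      omega

/-- transfer of `POdd` along an isomorphism, plus classification -/
theorem falseOn_aux_odd {k : ℕ} (hk : 1 ≤ k) (Wt : Type) [Finite Wt] [Nonempty Wt]
    (Ht : SimpleGraph Wt) (h : POdd Ht k) :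
    Nonempty (cycleGraph (2*k+1) ≃g Ht) := by
  obtain ⟨hreg, hdiam, hfar⟩ := h
  have hpre : Ht.Preconnected := fun x y => by
    obtain ⟨w, -⟩ := hdiam x y
    exact ⟨w⟩
  obtain ⟨p, hp3, ⟨e⟩⟩ := classify Ht hreg hpre
  have hP' : POdd (cycleGraph p) k := by
    refine ⟨twoReg_cycle hp3, fun i j => (iso_relLE e k i j).mp (hdiam _ _), fun x => ?_⟩
    obtain ⟨Y, Z, hYZ, hY, hZ⟩ := hfar (e x)
    refine ⟨e.symm Y, e.symm Z, ?_, ?_, ?_⟩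
    · intro hh
      apply hYZ
      have := congrArg e.toEquiv hh
      simpa using this
    · intro hc
      have := (iso_relLE e (k-1) x (e.symm Y)).mpr hc
      rw [RelIso.apply_symm_apply] at this
      exact hY this
    · intro hc
      have := (iso_relLE e (k-1) x (e.symm Z)).mpr hc
      rw [RelIso.apply_symm_apply] at this
      exact hZ this
  have hpn : p = 2*k+1 := pin_odd hp3 hk hP'
  subst hpn
  exact ⟨e⟩

theorem falseOn_aux_even {k : ℕ} (hk : 2 ≤ k) (Wt : Type) [Finite Wt] [Nonempty Wt]
    (Ht : SimpleGraph Wt) (h : PEven Ht k) :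
    Nonempty (cycleGraph (2*k) ≃g Ht) := by
  obtain ⟨hreg, hdiam, hex, huniq⟩ := h
  have hpre : Ht.Preconnected := fun x y => by
    obtain ⟨w, -⟩ := hdiam x y
    exact ⟨w⟩
  obtain ⟨p, hp3, ⟨e⟩⟩ := classify Ht hreg hpre
  have hP' : PEven (cycleGraph p) k := by
    refine ⟨twoReg_cycle hp3, fun i j => (iso_relLE e k i j).mp (hdiam _ _), ?_, ?_⟩
    · obtain ⟨X, Y, hXY⟩ := hex
      refine ⟨e.symm X, e.symm Y, fun hc => hXY ?_⟩
      have := (iso_relLE e (k-1) (e.symm X) (e.symm Y)).mpr hc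
      rwa [RelIso.apply_symm_apply, RelIso.apply_symm_apply] at this
    · intro x y z hyz
      rcases huniq (e x) (e y) (e z) (fun hh => hyz (e.injective hh)) with hc | hc
      · exact Or.inl ((iso_relLE e (k-1) x y).mp hc)
      · exact Or.inr ((iso_relLE e (k-1) x z).mp hc)
  have hpn : p = 2*k := pin_even hp3 hk hP'
  subst hpn
  exact ⟨e⟩

theorem clog_lt_logb {n k : ℕ} (hn : 3 ≤ n) (hkn : 2*k ≤ n) :
    (Nat.clog 2 k : ℝ) < Real.logb 2 n := by
  have hn1 : (1:ℝ) < (n:ℝ) := by exact_mod_cast (by omega : 1 < n)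
  rcases Nat.lt_or_ge k 2 with hk | hk
  · rw [Nat.clog_of_right_le_one (by omega)]
    exact_mod_cast Real.logb_pos (by norm_num) hn1
  · have hpred : 2 ^ (Nat.clog 2 k - 1) < k := by
      have := Nat.pow_pred_clog_lt_self (b := 2) (by norm_num) (x := k) (by omega)
      simpa [Nat.pred_eq_sub_one] using this
    have hcpos : 0 < Nat.clog 2 k := Nat.clog_pos (by norm_num) hk
    have hpow : 2 ^ Nat.clog 2 k < n := by
      have : 2 ^ Nat.clog 2 k = 2 * 2 ^ (Nat.clog 2 k - 1) := by
        rw [← pow_succ']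
        congr 1
        omega
      omega
    have hpowR : ((2:ℝ)) ^ Nat.clog 2 k < (n:ℝ) := by exact_mod_cast hpow
    calc (Nat.clog 2 k : ℝ) = Real.logb 2 ((2:ℝ) ^ Nat.clog 2 k) := by
          rw [Real.logb_pow, Real.logb_self_eq_one (by norm_num), mul_one]
      _ < Real.logb 2 n := Real.logb_lt_logb (by norm_num) (by positivity) hpowR

theorem qr_bound_real {n k q : ℕ} (hn : 3 ≤ n) (hkn : 2*k ≤ n)
    (hq : q ≤ max 4 (3 + Nat.clog 2 k)) : (q : ℝ) < Real.logb 2 n + 3 := by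
  have h1 : (1:ℝ) < Real.logb 2 n := by
    have : Real.logb 2 2 < Real.logb 2 n := by
      apply Real.logb_lt_logb (by norm_num) (by norm_num)
      exact_mod_cast (by omega : 2 < n)
    rwa [Real.logb_self_eq_one (by norm_num)] at this
  have h2 := clog_lt_logb hn hkn
  have hcast : (q:ℝ) ≤ ((max 4 (3 + Nat.clog 2 k) : ℕ) : ℝ) := Nat.cast_le.mpr hq
  rcases Nat.le_total 4 (3 + Nat.clog 2 k) with h | h
  · rw [Nat.max_eq_right h] at hcast
    push_cast at hcast
    linarith
  · rw [Nat.max_eq_left h] at hcast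
    push_cast at hcast
    linarith

end FOGaux


/-- For `n ≥ 3`, the cycle `C_n` is defined by a sentence of quantifier
rank less than `log₂ n + 3`. -/
theorem cycle_definability (n : ℕ) (hn : 3 ≤ n) :
    ∃ φ : FOG.Fml, FOG.Defines (SimpleGraph.cycleGraph n) φ ∧
      (φ.qr : ℝ) < Real.logb 2 n + 3 := by
  classical
  set k := n / 2 with hk
  have hkn : 2*k ≤ n := by omega
  by_cases hpar : n % 2 = 1
  · -- n odd
    have hnk : n = 2*k+1 := by omega
    have hk1 : 1 ≤ k := by omega
    refine ⟨FOGaux.phiOdd k, ⟨FOGaux.sent_phiOdd k, FOGaux.nc_phiOdd k, ?_, ?_⟩,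
      FOGaux.qr_bound_real hn hkn (FOGaux.qr_phiOdd k)⟩
    · intro ρ
      rw [FOGaux.sat_phiOdd]
      rw [hnk]
      exact FOGaux.podd_cycle k hk1
    · intro Wt _ _ Ht hniso ρ hSat
      rw [FOGaux.sat_phiOdd] at hSat
      have hiso := FOGaux.falseOn_aux_odd hk1 Wt Ht hSat
      rw [← hnk] at hiso
      exact hniso hiso
  · -- n even
    have hnk : n = 2*k := by omega
    have hk2 : 2 ≤ k := by omega
    refine ⟨FOGaux.phiEven k, ⟨FOGaux.sent_phiEven k, FOGaux.nc_phiEven k, ?_, ?_⟩,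
      FOGaux.qr_bound_real hn hkn (FOGaux.qr_phiEven k)⟩
    · intro ρ
      rw [FOGaux.sat_phiEven]
      rw [hnk]
      exact FOGaux.peven_cycle k hk2
    · intro Wt _ _ Ht hniso ρ hSat
      rw [FOGaux.sat_phiEven] at hSat
      have hiso := FOGaux.falseOn_aux_even hk2 Wt Ht hSat
      rw [← hnk] at hiso
      exact hniso hiso
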